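/- For the bilinear objective f(x,y) = xy on ℝ × ℝ, the simultaneous gradient-descent-ascent iteration with momentum, x_{t+1} = x_t - η y_t + β(x_t - x_{t-1}), y_{t+1} = y_t + η x_t + β(y_t - y_{t-1}), with stepsize η = 0.2 and momentum β = -0.8, initialized at (x_0,y_0) = (x_{-1},y_{-1}) = (1,1), does not converge to the saddle point (0,0); in fact the sequence ‖(x_t,y_t)‖ does not tend to 0. -/

import Mathlib

open Filter

open Complex

noncomputable def DD : ℝ := Real.sqrt 10.2464
noncomputable def pp : ℝ := Real.sqrt ((3.2 + DD) / 2)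
noncomputable def qq : ℝ := 0.04 / pp

lemma DD_sq : DD ^ 2 = 10.2464 := Real.sq_sqrt (by norm_num)
lemma DD_nonneg : 0 ≤ DD := Real.sqrt_nonneg _
lemma DD_lb : (3.2009 : ℝ) ≤ DD := by nlinarith [DD_sq, DD_nonneg]
lemma DD_ub : DD ≤ 3.201 := by nlinarith [DD_sq, DD_nonneg]

lemma pp_sq : pp ^ 2 = (3.2 + DD) / 2 := Real.sq_sqrt (by nlinarith [DD_nonneg])
lemma pp_nonneg : 0 ≤ pp := Real.sqrt_nonneg _
lemma pp_lb : (1.7889 : ℝ) ≤ pp := by nlinarith [pp_sq, pp_nonneg, DD_lb]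
lemma pp_ub : pp ≤ 1.789 := by nlinarith [pp_sq, pp_nonneg, DD_ub]
lemma pp_pos : 0 < pp := lt_of_lt_of_le (by norm_num) pp_lb

lemma ppqq : pp * qq = 0.04 := by
  unfold qq; rw [mul_div_assoc'] ; exact mul_div_cancel_left₀ _ (ne_of_gt pp_pos)

lemma qq_lb : (0.02235 : ℝ) ≤ qq := by
  have h := ppqq
  nlinarith [pp_ub, pp_pos]
lemma qq_ub : qq ≤ 0.02237 := by
  have h := ppqq
  nlinarith [pp_lb, pp_pos]

lemma pq_sq_diff : pp ^ 2 - qq ^ 2 = 3.2 := by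
  have h1 : qq = 0.04 / pp := rfl
  have h2 := pp_sq
  have h3 := pp_pos
  have h4 := DD_sq
  have h5 := DD_nonneg
  rw [h1]
  field_simp
  nlinarith [h2, h4]

noncomputable def aC : ℂ := ⟨0.2, 0.2⟩
noncomputable def lam1 : ℂ := ⟨(0.2 + pp) / 2, (0.2 + qq) / 2⟩
noncomputable def lam2 : ℂ := aC - lam1

lemma char_eq : lam1 ^ 2 - aC * lam1 - 0.8 = 0 := by
  have h1 := pq_sq_diff
  have h2 := ppqq
  have h3 : (0.8:ℂ).re = 0.8 := by norm_num
  have h4 : (0.8:ℂ).im = 0 := by norm_num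
  apply Complex.ext <;>
    simp [lam1, aC, pow_two, Complex.ext_iff, Complex.mul_re, Complex.mul_im, h3, h4] <;>
    nlinarith [h1, h2]

lemma lam_prod : lam1 * lam2 = -0.8 := by
  have h := char_eq
  unfold lam2
  linear_combination -h

lemma one_le_abs_lam1 : 1 ≤ ‖lam1‖ := by
  have hns : 1 ≤ Complex.normSq lam1 := by
    simp [lam1, Complex.normSq_apply]
    nlinarith [pp_lb, qq_lb, pp_nonneg, qq_ub]
  nlinarith [Complex.sq_norm lam1, norm_nonneg lam1, hns]

lemma abs_re_lam2_bound : lam2.re - lam2.im = (qq - pp) / 2 := by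
  simp [lam2, lam1, aC]
  ring


/-- Simultaneous GDA with momentum β = -0.8 and stepsize η = 0.2 on f(x,y) = xy,
initialized at (1,1) (with x_{-1} = x_0, y_{-1} = y_0), does not converge to (0,0).
Here `xp t`, `yp t` denote the previous iterates x_{t-1}, y_{t-1}. -/
theorem simultaneous_negative_momentum_diverges
    (η β : ℝ) (hη : η = 0.2) (hβ : β = -0.8)
    (x y xp yp : ℕ → ℝ)
    (hx0 : x 0 = 1) (hy0 : y 0 = 1) (hxp0 : xp 0 = 1) (hyp0 : yp 0 = 1)
    (hxp : ∀ t, xp (t + 1) = x t) (hyp : ∀ t, yp (t + 1) = y t)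
    (hx : ∀ t, x (t + 1) = x t - η * y t + β * (x t - xp t))
    (hy : ∀ t, y (t + 1) = y t + η * x t + β * (y t - yp t)) :
    ¬ Tendsto (fun t => ‖(x t, y t)‖) atTop (nhds 0) := by
  subst hη hβ
  intro h
  set z : ℕ → ℂ := fun t => ⟨x t, y t⟩ with hzdef
  have h08re : (0.8:ℂ).re = 0.8 := by norm_num
  have h08im : (0.8:ℂ).im = 0 := by norm_num
  have hrec : ∀ t, z (t + 2) = aC * z (t + 1) + (0.8:ℂ) * z t := by
    intro t
    have e1 := hx (t + 1); have e2 := hy (t + 1)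
    rw [hxp t] at e1; rw [hyp t] at e2
    apply Complex.ext <;>
      simp [hzdef, aC, Complex.mul_re, Complex.mul_im, h08re, h08im,
        show t + 2 = t + 1 + 1 from rfl, e1, e2] <;> ring
  set u : ℕ → ℂ := fun t => z (t + 1) - lam2 * z t with hudef
  have hsum : aC - lam2 - lam1 = 0 := by unfold lam2; ring
  have hu : ∀ t, u (t + 1) = lam1 * u t := by
    intro t
    show z (t + 2) - lam2 * z (t + 1) = lam1 * (z (t + 1) - lam2 * z t)
    rw [hrec t]
    linear_combination z (t + 1) * hsum + z t * lam_prod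
  have hupow : ∀ t, ‖u 0‖ ≤ ‖u t‖ := by
    intro t
    induction t with
    | zero => exact le_refl _
    | succ n ih =>
      rw [hu n, norm_mul]
      calc ‖u 0‖ ≤ ‖u n‖ := ih
        _ = 1 * ‖u n‖ := (one_mul _).symm
        _ ≤ ‖lam1‖ * ‖u n‖ :=
          mul_le_mul_of_nonneg_right one_le_abs_lam1 (norm_nonneg _)
  have hx1 : x 1 = 0.8 := by have := hx 0; rw [hx0, hy0, hxp0] at this; norm_num at this; linarith
  have hy1 : y 1 = 1.2 := by have := hy 0; rw [hx0, hy0, hyp0] at this; norm_num at this; linarith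
  have hre : (0.8:ℝ) ≤ (u 0).re := by
    have : (u 0).re = 0.8 - (lam2.re - lam2.im) := by
      simp [hudef, hzdef, Complex.mul_re, hx1, hy1, hx0, hy0]
    rw [this, abs_re_lam2_bound]
    nlinarith [pp_lb, qq_ub]
  have habs0 : (0.8:ℝ) ≤ ‖u 0‖ := by
    calc (0.8:ℝ) ≤ (u 0).re := hre
      _ ≤ |(u 0).re| := le_abs_self _
      _ ≤ ‖u 0‖ := Complex.abs_re_le_norm _
  have hxlim : Tendsto x atTop (nhds 0) :=
    squeeze_zero_norm (fun t => norm_fst_le ((x t, y t))) h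
  have hylim : Tendsto y atTop (nhds 0) :=
    squeeze_zero_norm (fun t => norm_snd_le ((x t, y t))) h
  have hzlim : Tendsto z atTop (nhds 0) := by
    have h1 : Tendsto (fun t => ((x t : ℝ) : ℂ)) atTop (nhds 0) := by
      have := (Complex.continuous_ofReal.tendsto 0).comp hxlim
      simpa [Function.comp_def] using this
    have h2 : Tendsto (fun t => ((y t : ℝ) : ℂ)) atTop (nhds 0) := by
      have := (Complex.continuous_ofReal.tendsto 0).comp hylim
      simpa [Function.comp_def] using this
    have h3 : Tendsto (fun t => ((x t : ℝ) : ℂ) + ((y t : ℝ) : ℂ) * Complex.I)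
        atTop (nhds 0) := by
      simpa using h1.add (h2.mul_const Complex.I)
    convert h3 using 2 with t
    exact (Complex.mk_eq_add_mul_I (x t) (y t))
  have hulim : Tendsto u atTop (nhds 0) := by
    have h1 : Tendsto (fun t => z (t + 1)) atTop (nhds 0) :=
      hzlim.comp (tendsto_add_atTop_nat 1)
    have h2 : Tendsto (fun t => lam2 * z t) atTop (nhds 0) := by
      simpa using hzlim.const_mul lam2
    simpa using h1.sub h2
  have habslim : Tendsto (fun t => ‖u t‖) atTop (nhds 0) := by
    have := hulim.norm
    simpa using this
  have : (0.8:ℝ) ≤ 0 := ge_of_tendsto' habslim (fun t => le_trans habs0 (hupow t))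
  linarith
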